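/- Let f ∈ ℂ⟦x,y⟧ with f(0,0) = 0 and f(0,y) ≠ 0, let m := ord f(0,y) (so 1 ≤ m < ∞), and suppose the Milnor number μ := dim_ℂ ℂ⟦x,y⟧/(f_x, f_y) is finite. Then for every n ≥ 1, the power series g(x,y) := f(x^n, y) satisfies dim_ℂ ℂ⟦x,y⟧/(g_x, g_y) = n·μ + (m − 1)(n − 1). (This is the Milnor number of the Kummer transform at a preimage of a point of type 1, where m is the intersection multiplicity of the original curve with the coordinate axis x = 0 at the point.) -/

import Mathlib

noncomputable section

/-- Formal partial derivative `∂f/∂(x_i)` of a two-variable formal power series. -/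
def pderiv2 (i : Fin 2) (f : MvPowerSeries (Fin 2) ℂ) : MvPowerSeries (Fin 2) ℂ :=
  fun e => ((e i : ℂ) + 1) * MvPowerSeries.coeff (e + Finsupp.single i 1) f

/-- Substitution `x ↦ xⁿ` in a two-variable formal power series `f(x,y)`:
the coefficient of `x^a y^b` in `f(xⁿ, y)` is the coefficient of `x^(a/n) y^b` of `f`
when `n ∣ a`, and `0` otherwise. -/
def substX (n : ℕ) (f : MvPowerSeries (Fin 2) ℂ) : MvPowerSeries (Fin 2) ℂ :=
  fun e => if n ∣ e 0
    then MvPowerSeries.coeff (Finsupp.single 0 (e 0 / n) + Finsupp.single 1 (e 1)) f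
    else 0

/-- Substitution `x ↦ xⁿ`, `y ↦ yⁿ` in a two-variable formal power series `f(x,y)`. -/
def substXY (n : ℕ) (f : MvPowerSeries (Fin 2) ℂ) : MvPowerSeries (Fin 2) ℂ :=
  fun e => if n ∣ e 0 ∧ n ∣ e 1
    then MvPowerSeries.coeff (Finsupp.single 0 (e 0 / n) + Finsupp.single 1 (e 1 / n)) f
    else 0

/-- The one-variable power series `f(0, y)`. -/
def restY (f : MvPowerSeries (Fin 2) ℂ) : PowerSeries ℂ :=
  PowerSeries.mk fun b => MvPowerSeries.coeff (Finsupp.single 1 b) f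

/-- The one-variable power series `f(x, 0)`. -/
def restX (f : MvPowerSeries (Fin 2) ℂ) : PowerSeries ℂ :=
  PowerSeries.mk fun a => MvPowerSeries.coeff (Finsupp.single 0 a) f

open MvPowerSeries Finset

abbrev R2 := MvPowerSeries (Fin 2) ℂ

/-- canonical exponent -/
def E (a b : ℕ) : Fin 2 →₀ ℕ := Finsupp.single 0 a + Finsupp.single 1 b

lemma E_apply0 (a b : ℕ) : E a b 0 = a := by
  simp [E, Finsupp.single_apply]

lemma E_apply1 (a b : ℕ) : E a b 1 = b := by
  simp [E, Finsupp.single_apply]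

lemma E_eta (e : Fin 2 →₀ ℕ) : E (e 0) (e 1) = e := by
  ext i
  fin_cases i
  · simpa using E_apply0 (e 0) (e 1)
  · simpa using E_apply1 (e 0) (e 1)

lemma E_add (a b c d : ℕ) : E a b + E c d = E (a+c) (b+d) := by
  simp only [E, Finsupp.single_add]
  abel

lemma sum_antidiagonal_fin2 {M : Type*} [AddCommMonoid M] (e : Fin 2 →₀ ℕ)
    (F : (Fin 2 →₀ ℕ) → (Fin 2 →₀ ℕ) → M) :
    ∑ p ∈ Finset.HasAntidiagonal.antidiagonal e, F p.1 p.2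
      = ∑ i ∈ Finset.range (e 0 + 1), ∑ j ∈ Finset.range (e 1 + 1),
          F (E i j) (E (e 0 - i) (e 1 - j)) := by
  rw [← Finset.sum_product']
  refine Finset.sum_nbij' (fun p => (p.1 0, p.1 1))
    (fun q => (E q.1 q.2, E (e 0 - q.1) (e 1 - q.2))) ?_ ?_ ?_ ?_ ?_
  · rintro ⟨p1, p2⟩ hp
    rw [Finset.HasAntidiagonal.mem_antidiagonal] at hp
    have h0 : p1 0 + p2 0 = e 0 := by rw [← hp]; simp
    have h1 : p1 1 + p2 1 = e 1 := by rw [← hp]; simp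
    simp only [Finset.mem_product, Finset.mem_range]
    omega
  · rintro ⟨i, j⟩ hq
    simp only [Finset.mem_product, Finset.mem_range] at hq
    rw [Finset.HasAntidiagonal.mem_antidiagonal, E_add]
    rw [show i + (e 0 - i) = e 0 by omega, show j + (e 1 - j) = e 1 by omega, E_eta]
  · rintro ⟨p1, p2⟩ hp
    rw [Finset.HasAntidiagonal.mem_antidiagonal] at hp
    have h0 : p1 0 + p2 0 = e 0 := by rw [← hp]; simp
    have h1 : p1 1 + p2 1 = e 1 := by rw [← hp]; simp
    simp only [Prod.mk.injEq]
    constructor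
    · exact E_eta p1
    · rw [show e 0 - p1 0 = p2 0 by omega, show e 1 - p1 1 = p2 1 by omega]
      exact E_eta p2
  · rintro ⟨i, j⟩ hq
    simp [E_apply0, E_apply1]
  · rintro ⟨p1, p2⟩ hp
    rw [Finset.HasAntidiagonal.mem_antidiagonal] at hp
    have h0 : p1 0 + p2 0 = e 0 := by rw [← hp]; simp
    have h1 : p1 1 + p2 1 = e 1 := by rw [← hp]; simp
    simp only
    rw [show e 0 - p1 0 = p2 0 by omega, show e 1 - p1 1 = p2 1 by omega, E_eta, E_eta]

lemma coeff_mul2 (u v : R2) (a b : ℕ) :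
    MvPowerSeries.coeff (E a b) (u * v)
      = ∑ i ∈ Finset.range (a+1), ∑ j ∈ Finset.range (b+1),
          MvPowerSeries.coeff (E i j) u * MvPowerSeries.coeff (E (a-i) (b-j)) v := by
  rw [MvPowerSeries.coeff_mul,
    sum_antidiagonal_fin2 (E a b)
      (fun p q => MvPowerSeries.coeff p u * MvPowerSeries.coeff q v)]
  simp [E_apply0, E_apply1]

/-! ### substX and psi -/

lemma coeff_substX (n : ℕ) (f : R2) (a b : ℕ) :
    MvPowerSeries.coeff (E a b) (substX n f)
      = if n ∣ a then MvPowerSeries.coeff (E (a/n) b) f else 0 := by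
  show substX n f (E a b) = _
  rw [substX, E_apply0, E_apply1]
  rfl

/-- extraction of the part of `h` with x-exponent `≡ j [n]`, divided by `x^j`, `x^n ↦ x`. -/
def psi (n j : ℕ) (h : R2) : R2 :=
  fun e => MvPowerSeries.coeff (E (n * e 0 + j) (e 1)) h

lemma coeff_psi (n j : ℕ) (h : R2) (a b : ℕ) :
    MvPowerSeries.coeff (E a b) (psi n j h)
      = MvPowerSeries.coeff (E (n * a + j) b) h := by
  show psi n j h (E a b) = _
  rw [psi, E_apply0, E_apply1]

/-- Reindexing a sum whose terms vanish off the residue class `j` mod `n`. -/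
lemma sum_reindex_residue {M : Type*} [AddCommMonoid M] (n a₀ j : ℕ) (hn : 1 ≤ n) (hj : j < n)
    (G : ℕ → M) (hG : ∀ i, i ≤ n * a₀ + j → ¬ n ∣ (n * a₀ + j - i) → G i = 0) :
    ∑ i ∈ Finset.range (n * a₀ + j + 1), G i = ∑ c ∈ Finset.range (a₀ + 1), G (n * c + j) := by
  rw [show ∑ c ∈ Finset.range (a₀ + 1), G (n * c + j)
      = ∑ i ∈ (Finset.range (a₀ + 1)).image (fun c => n * c + j), G i from
    (Finset.sum_image (by intro x _ y _ h; simp only at h; exact Nat.eq_of_mul_eq_mul_left hn (by omega))).symm]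
  apply (Finset.sum_subset ?_ ?_).symm
  · intro i hi
    simp only [Finset.mem_image, Finset.mem_range] at hi ⊢
    obtain ⟨c, hc, rfl⟩ := hi
    have : n * c ≤ n * a₀ := Nat.mul_le_mul_left n (by omega)
    omega
  · intro i hi hni
    simp only [Finset.mem_image, Finset.mem_range] at hi hni
    apply hG i (by omega)
    rintro ⟨d, hd⟩
    have hdn : n * d ≤ n * a₀ + j - i := le_of_eq hd.symm
    have hda : d ≤ a₀ := by
      by_contra hcon
      have h1 : n * (a₀ + 1) ≤ n * d := Nat.mul_le_mul_left n (by omega)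
      have h2 : n * (a₀ + 1) = n * a₀ + n := by ring
      omega
    refine hni ⟨a₀ - d, by omega, ?_⟩
    have : n * (a₀ - d) + n * d = n * a₀ := by
      rw [← Nat.mul_add]; congr 1; omega
    omega

lemma psi_mul_substX (n j : ℕ) (hn : 1 ≤ n) (hj : j < n) (u v : R2) :
    psi n j (u * substX n v) = psi n j u * v := by
  apply MvPowerSeries.ext; intro e
  obtain ⟨a, b, rfl⟩ : ∃ a b, e = E a b := ⟨e 0, e 1, (E_eta e).symm⟩
  rw [coeff_psi, coeff_mul2, coeff_mul2]
  rw [sum_reindex_residue n a j hn hj _ ?vanish]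
  case vanish =>
    intro i hi hnd
    apply Finset.sum_eq_zero; intro k _
    rw [coeff_substX, if_neg hnd, mul_zero]
  apply Finset.sum_congr rfl; intro c hc
  apply Finset.sum_congr rfl; intro k _
  rw [Finset.mem_range] at hc
  have hd : n * a + j - (n * c + j) = n * (a - c) := by
    have : n * (a - c) + n * c = n * a := by
      rw [← Nat.mul_add]; congr 1; omega
    omega
  rw [coeff_psi, coeff_substX, hd, if_pos (Dvd.intro _ rfl), Nat.mul_div_cancel_left _ hn]

lemma substX_mul (n : ℕ) (hn : 1 ≤ n) (u v : R2) :
    substX n (u * v) = substX n u * substX n v := by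
  apply MvPowerSeries.ext; intro e
  obtain ⟨a, b, rfl⟩ : ∃ a b, e = E a b := ⟨e 0, e 1, (E_eta e).symm⟩
  rw [coeff_substX]
  by_cases hdvd : n ∣ a
  · obtain ⟨a₀, rfl⟩ := hdvd
    rw [if_pos (Dvd.intro _ rfl), Nat.mul_div_cancel_left _ hn,
      coeff_mul2 u v, coeff_mul2 (substX n u) (substX n v)]
    have hre := sum_reindex_residue n a₀ 0 hn hn
      (fun i => ∑ k ∈ Finset.range (b+1),
        MvPowerSeries.coeff (E i k) (substX n u)
          * MvPowerSeries.coeff (E (n*a₀ - i) (b-k)) (substX n v)) ?_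
    · rw [show n * a₀ + 0 = n * a₀ by omega] at hre
      rw [hre]
      apply Finset.sum_congr rfl; intro c hc
      apply Finset.sum_congr rfl; intro k _
      rw [Finset.mem_range] at hc
      have hd : n * a₀ - (n * c + 0) = n * (a₀ - c) := by
        have : n * (a₀ - c) + n * c = n * a₀ := by
          rw [← Nat.mul_add]; congr 1; omega
        omega
      rw [show n * c + 0 = n * c by omega] at hd ⊢
      rw [coeff_substX, coeff_substX, hd, if_pos (Dvd.intro _ rfl), if_pos (Dvd.intro _ rfl),
        Nat.mul_div_cancel_left _ hn, Nat.mul_div_cancel_left _ hn]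
    · intro i hi hnd
      apply Finset.sum_eq_zero; intro k _
      rw [show n * a₀ + 0 = n * a₀ by omega] at hnd
      rw [coeff_substX (n := n) (a := i)]
      by_cases hni : n ∣ i
      · exact absurd ((Nat.dvd_sub (Dvd.intro _ rfl) hni)) hnd
      · rw [if_neg hni, zero_mul]
  · rw [if_neg hdvd]
    symm
    rw [coeff_mul2]
    apply Finset.sum_eq_zero; intro i hi
    apply Finset.sum_eq_zero; intro k _
    rw [Finset.mem_range] at hi
    rw [coeff_substX, coeff_substX]
    by_cases hni : n ∣ i
    · by_cases hnai : n ∣ a - i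
      · exact absurd (by
          obtain ⟨c, hc⟩ := hni; obtain ⟨d, hd⟩ := hnai
          exact ⟨c + d, by rw [Nat.mul_add]; omega⟩) hdvd
      · rw [if_neg hnai, mul_zero]
    · rw [if_neg hni, zero_mul]

lemma E_sub_single0 (a b i : ℕ) : E a b - Finsupp.single 0 i = E (a-i) b := by
  ext t; fin_cases t
  · rw [Finsupp.tsub_apply]
    simp [E_apply0, Finsupp.single_apply, Fin.mk_zero]
  · rw [Finsupp.tsub_apply]
    simp [E_apply1, Finsupp.single_apply]

lemma coeff_Xpow_mul (i : ℕ) (w : R2) (a b : ℕ) :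
    MvPowerSeries.coeff (E a b) ((MvPowerSeries.X 0 : R2)^i * w)
      = if i ≤ a then MvPowerSeries.coeff (E (a-i) b) w else 0 := by
  rw [MvPowerSeries.X_pow_eq, MvPowerSeries.coeff_monomial_mul]
  have h1 : Finsupp.single (0 : Fin 2) i ≤ E a b ↔ i ≤ a := by
    rw [Finsupp.single_le_iff, E_apply0]
  by_cases h : i ≤ a
  · rw [if_pos (h1.mpr h), if_pos h, one_mul, E_sub_single0]
  · rw [if_neg (fun hc => h (h1.mp hc)), if_neg h]

lemma decompose (n : ℕ) (hn : 1 ≤ n) (h : R2) :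
    h = ∑ i ∈ Finset.range n, (MvPowerSeries.X 0 : R2)^i * substX n (psi n i h) := by
  apply MvPowerSeries.ext; intro e
  obtain ⟨a, b, rfl⟩ : ∃ a b, e = E a b := ⟨e 0, e 1, (E_eta e).symm⟩
  rw [map_sum, Finset.sum_eq_single (a % n)]
  · have hdm := Nat.div_add_mod a n
    have h1 : a - a % n = n * (a / n) := by omega
    rw [coeff_Xpow_mul, if_pos (Nat.mod_le a n), h1, coeff_substX,
      if_pos (Dvd.intro _ rfl), Nat.mul_div_cancel_left _ hn, coeff_psi, hdm]
  · intro i hi hne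
    rw [Finset.mem_range] at hi
    rw [coeff_Xpow_mul]
    by_cases hia : i ≤ a
    · rw [if_pos hia, coeff_substX, if_neg]
      rintro ⟨d, hd⟩
      apply hne
      have ha : a = n * d + i := by omega
      rw [ha, Nat.mul_add_mod, Nat.mod_eq_of_lt hi]
    · rw [if_neg hia]
  · intro habs
    exact absurd (Finset.mem_range.mpr (Nat.mod_lt a hn)) habs

lemma psi_Xpow_substX (n i j : ℕ) (hn : 1 ≤ n) (hi : i < n) (hj : j < n) (h : R2) :
    psi n j ((MvPowerSeries.X 0 : R2)^i * substX n h) = if i = j then h else 0 := by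
  apply MvPowerSeries.ext; intro e
  obtain ⟨a, b, rfl⟩ : ∃ a b, e = E a b := ⟨e 0, e 1, (E_eta e).symm⟩
  rw [coeff_psi, coeff_Xpow_mul]
  by_cases hij : i = j
  · subst hij
    rw [if_pos (by omega), coeff_substX, if_pos (by exact ⟨a, by omega⟩), if_pos rfl]
    congr 1
    have : n * a + i - i = n * a := by omega
    rw [this, Nat.mul_div_cancel_left _ hn]
  · rw [if_neg hij, map_zero]
    by_cases hia : i ≤ n * a + j
    · rw [if_pos hia, coeff_substX, if_neg]
      rintro ⟨d, hd⟩
      apply hij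
      have hi' : n * d + i = n * a + j := by omega
      have : (n * d + i) % n = (n * a + j) % n := by rw [hi']
      rwa [Nat.mul_add_mod, Nat.mul_add_mod, Nat.mod_eq_of_lt hi, Nat.mod_eq_of_lt hj] at this
    · rw [if_neg hia]

lemma psi_add (n j : ℕ) (u v : R2) : psi n j (u + v) = psi n j u + psi n j v := by
  apply MvPowerSeries.ext; intro e
  obtain ⟨a, b, rfl⟩ : ∃ a b, e = E a b := ⟨e 0, e 1, (E_eta e).symm⟩
  rw [map_add, coeff_psi, coeff_psi, coeff_psi, map_add]

lemma psi_smul (n j : ℕ) (c : ℂ) (u : R2) : psi n j (c • u) = c • psi n j u := by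
  apply MvPowerSeries.ext; intro e
  obtain ⟨a, b, rfl⟩ : ∃ a b, e = E a b := ⟨e 0, e 1, (E_eta e).symm⟩
  rw [map_smul, coeff_psi, coeff_psi, map_smul]

lemma substX_add (n : ℕ) (u v : R2) : substX n (u + v) = substX n u + substX n v := by
  apply MvPowerSeries.ext; intro e
  obtain ⟨a, b, rfl⟩ : ∃ a b, e = E a b := ⟨e 0, e 1, (E_eta e).symm⟩
  rw [map_add, coeff_substX, coeff_substX, coeff_substX, map_add]
  split_ifs <;> simp

lemma substX_smul (n : ℕ) (c : ℂ) (u : R2) : substX n (c • u) = c • substX n u := by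
  apply MvPowerSeries.ext; intro e
  obtain ⟨a, b, rfl⟩ : ∃ a b, e = E a b := ⟨e 0, e 1, (E_eta e).symm⟩
  rw [map_smul, coeff_substX, coeff_substX, map_smul]
  split_ifs <;> simp

/-! ### The linear map theta and the quotient dimension multiplication -/

def psiL (n j : ℕ) : R2 →ₗ[ℂ] R2 where
  toFun := psi n j
  map_add' := psi_add n j
  map_smul' := psi_smul n j

def theta (n : ℕ) (I : Ideal R2) : R2 →ₗ[ℂ] (Fin n → R2 ⧸ I) :=
  LinearMap.pi fun i => (Ideal.Quotient.mkₐ ℂ I).toLinearMap.comp (psiL n (i : ℕ))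

lemma theta_apply (n : ℕ) (I : Ideal R2) (h : R2) (i : Fin n) :
    theta n I h i = Ideal.Quotient.mk I (psi n (i : ℕ) h) := rfl

lemma theta_surjective (n : ℕ) (hn : 1 ≤ n) (I : Ideal R2) :
    Function.Surjective (theta n I) := by
  intro q
  choose hh hhq using fun i : Fin n => Ideal.Quotient.mk_surjective (I := I) (q i)
  refine ⟨∑ i : Fin n, (MvPowerSeries.X 0 : R2)^(i:ℕ) * substX n (hh i), ?_⟩
  funext j
  rw [theta_apply]
  rw [show psi n (j:ℕ) = ⇑(psiL n (j:ℕ)) from rfl, map_sum]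
  simp only [show ⇑(psiL n (j:ℕ)) = psi n (j:ℕ) from rfl]
  have hc : ∀ i : Fin n, psi n (j:ℕ) ((MvPowerSeries.X 0 : R2)^(i:ℕ) * substX n (hh i))
      = if i = j then hh i else 0 := by
    intro i
    rw [psi_Xpow_substX n _ _ hn i.isLt j.isLt]
    simp only [Fin.val_eq_val]
  rw [Finset.sum_congr rfl (fun i _ => hc i), Finset.sum_ite_eq' Finset.univ j hh,
    if_pos (Finset.mem_univ j), hhq]

lemma theta_ker (n : ℕ) (hn : 1 ≤ n) (A B : R2) :
    LinearMap.ker (theta n (Ideal.span {A, B}))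
      = Submodule.restrictScalars ℂ (Ideal.span {substX n A, substX n B} : Ideal R2) := by
  ext h
  simp only [LinearMap.mem_ker, Submodule.restrictScalars_mem]
  constructor
  · intro hker
    have hmem : ∀ i : Fin n, psi n (i:ℕ) h ∈ Ideal.span {A, B} := by
      intro i
      have h1 := congrFun hker i
      rw [theta_apply] at h1
      simp only [Pi.zero_apply] at h1
      exact (Ideal.Quotient.eq_zero_iff_mem).mp h1
    rw [decompose n hn h]
    apply Submodule.sum_mem
    intro i hi
    rw [Finset.mem_range] at hi
    obtain ⟨u, v, huv⟩ := Ideal.mem_span_pair.mp (hmem ⟨i, hi⟩)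
    rw [← huv, substX_add n, substX_mul n hn, substX_mul n hn, mul_add, ← mul_assoc, ← mul_assoc]
    exact Ideal.add_mem _
      (Ideal.mul_mem_left _ _ (Ideal.subset_span (by simp)))
      (Ideal.mul_mem_left _ _ (Ideal.subset_span (by simp)))
  · intro hmem
    obtain ⟨u, v, huv⟩ := Ideal.mem_span_pair.mp hmem
    funext i
    show Ideal.Quotient.mk _ (psi n (i:ℕ) h) = 0
    rw [Ideal.Quotient.eq_zero_iff_mem, ← huv, psi_add, psi_mul_substX n _ hn i.isLt,
      psi_mul_substX n _ hn i.isLt]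
    exact Ideal.add_mem _
      (Ideal.mul_mem_left _ _ (Ideal.subset_span (by simp)))
      (Ideal.mul_mem_left _ _ (Ideal.subset_span (by simp)))

set_option maxHeartbeats 1000000 in
lemma substX_pair_quotient (n : ℕ) (hn : 1 ≤ n) (A B : R2)
    (hfin : Module.Finite ℂ (R2 ⧸ Ideal.span {A, B})) :
    Module.Finite ℂ (R2 ⧸ Ideal.span {substX n A, substX n B}) ∧
    Module.finrank ℂ (R2 ⧸ Ideal.span {substX n A, substX n B})
      = n * Module.finrank ℂ (R2 ⧸ Ideal.span {A, B}) := by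
  set I := Ideal.span ({A, B} : Set R2) with hI
  set J := Ideal.span ({substX n A, substX n B} : Set R2) with hJ
  let e1 : (R2 ⧸ LinearMap.ker (theta n I)) ≃ₗ[ℂ] (Fin n → R2 ⧸ I) :=
    LinearMap.quotKerEquivOfSurjective _ (theta_surjective n hn I)
  let e2 : (R2 ⧸ Submodule.restrictScalars ℂ J) ≃ₗ[ℂ] (R2 ⧸ LinearMap.ker (theta n I)) :=
    Submodule.quotEquivOfEq _ _ (theta_ker n hn A B).symm
  let e3 : (R2 ⧸ J) ≃ₗ[ℂ] (R2 ⧸ Submodule.restrictScalars ℂ J) :=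
    (Submodule.Quotient.restrictScalarsEquiv ℂ (J : Submodule R2 R2)).symm
  let e : (R2 ⧸ J) ≃ₗ[ℂ] (Fin n → R2 ⧸ I) := e3 ≪≫ₗ e2 ≪≫ₗ e1
  haveI : Module.Finite ℂ (Fin n → R2 ⧸ I) := Module.Finite.pi
  constructor
  · exact Module.Finite.equiv e.symm
  · rw [e.finrank_eq, Module.finrank_pi_fintype ℂ, Finset.sum_const, Finset.card_univ,
      Fintype.card_fin, smul_eq_mul]

/-! ### dimension of R/(X^p, Y^q) -/

lemma E_inj {i j i' j' : ℕ} (h : E i j = E i' j') : i = i' ∧ j = j' :=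
  ⟨by rw [← E_apply0 i j, h, E_apply0], by rw [← E_apply1 i j, h, E_apply1]⟩

lemma E_sub_single1 (a b j : ℕ) : E a b - Finsupp.single 1 j = E a (b-j) := by
  ext t; fin_cases t
  · rw [Finsupp.tsub_apply]
    simp [E_apply0, Finsupp.single_apply, Fin.mk_zero]
  · rw [Finsupp.tsub_apply]
    simp [E_apply1, Finsupp.single_apply]

lemma coeff_Ypow_mul (j : ℕ) (w : R2) (a b : ℕ) :
    MvPowerSeries.coeff (E a b) ((MvPowerSeries.X 1 : R2)^j * w)
      = if j ≤ b then MvPowerSeries.coeff (E a (b-j)) w else 0 := by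
  rw [MvPowerSeries.X_pow_eq, MvPowerSeries.coeff_monomial_mul]
  have h1 : Finsupp.single (1 : Fin 2) j ≤ E a b ↔ j ≤ b := by
    rw [Finsupp.single_le_iff, E_apply1]
  by_cases h : j ≤ b
  · rw [if_pos (h1.mpr h), if_pos h, one_mul, E_sub_single1]
  · rw [if_neg (fun hc => h (h1.mp hc)), if_neg h]

def kappa (p q : ℕ) : R2 →ₗ[ℂ] (Fin p × Fin q → ℂ) where
  toFun h := fun ij => MvPowerSeries.coeff (E ij.1 ij.2) h
  map_add' u v := by funext ij; simp
  map_smul' c u := by funext ij; simp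

lemma kappa_surjective (p q : ℕ) : Function.Surjective (kappa p q) := by
  intro c
  refine ⟨∑ ij : Fin p × Fin q, MvPowerSeries.monomial (E ij.1 ij.2) (c ij), ?_⟩
  funext ij
  rw [map_sum, Finset.sum_apply]
  have hterm : ∀ kl : Fin p × Fin q,
      kappa p q (MvPowerSeries.monomial (E kl.1 kl.2) (c kl)) ij
        = if kl = ij then c kl else 0 := by
    intro kl
    show MvPowerSeries.coeff (E ij.1 ij.2) (MvPowerSeries.monomial (E kl.1 kl.2) (c kl)) = _
    rw [MvPowerSeries.coeff_monomial]
    by_cases hkl : kl = ij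
    · subst hkl; rw [if_pos rfl, if_pos rfl]
    · rw [if_neg, if_neg hkl]
      intro hE
      exact hkl (by
        obtain ⟨h1, h2⟩ := E_inj hE.symm
        exact Prod.ext (Fin.val_injective h1) (Fin.val_injective h2))
  rw [Finset.sum_congr rfl (fun kl _ => hterm kl), Finset.sum_ite_eq' Finset.univ ij c,
    if_pos (Finset.mem_univ ij)]

lemma kappa_ker (p q : ℕ) :
    LinearMap.ker (kappa p q)
      = Submodule.restrictScalars ℂ
          (Ideal.span ({(MvPowerSeries.X 0 : R2)^p, (MvPowerSeries.X 1 : R2)^q} : Set R2)) := by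
  ext h
  simp only [LinearMap.mem_ker, Submodule.restrictScalars_mem]
  constructor
  · intro hker
    have hc : ∀ i j : ℕ, i < p → j < q → MvPowerSeries.coeff (E i j) h = 0 := by
      intro i j hi hj
      exact congrFun hker (⟨i, hi⟩, ⟨j, hj⟩)
    rw [Ideal.mem_span_pair]
    refine ⟨(fun e => MvPowerSeries.coeff (E (e 0 + p) (e 1)) h : R2),
      (fun e => if e 0 < p then MvPowerSeries.coeff (E (e 0) (e 1 + q)) h else 0 : R2), ?_⟩
    apply MvPowerSeries.ext; intro e
    obtain ⟨a, b, rfl⟩ : ∃ a b, e = E a b := ⟨e 0, e 1, (E_eta e).symm⟩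
    erw [map_add, mul_comm _ ((MvPowerSeries.X 0 : R2)^p), mul_comm _ ((MvPowerSeries.X 1 : R2)^q),
      coeff_Xpow_mul, coeff_Ypow_mul]
    have hu : ∀ a' b' : ℕ, MvPowerSeries.coeff (E a' b')
        (fun e => MvPowerSeries.coeff (E (e 0 + p) (e 1)) h : R2)
        = MvPowerSeries.coeff (E (a' + p) b') h := by
      intro a' b'
      show MvPowerSeries.coeff (E (E a' b' 0 + p) (E a' b' 1)) h = _
      rw [E_apply0, E_apply1]
    have hv : ∀ a' b' : ℕ, MvPowerSeries.coeff (E a' b')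
        (fun e => if e 0 < p then MvPowerSeries.coeff (E (e 0) (e 1 + q)) h else 0 : R2)
        = if a' < p then MvPowerSeries.coeff (E a' (b' + q)) h else 0 := by
      intro a' b'
      show (if E a' b' 0 < p then MvPowerSeries.coeff (E (E a' b' 0) (E a' b' 1 + q)) h else 0) = _
      rw [E_apply0, E_apply1]
    by_cases hap : p ≤ a
    · rw [if_pos hap, hu, show a - p + p = a by omega]
      by_cases hbq : q ≤ b
      · rw [if_pos hbq, hv, if_neg (by omega), add_zero]
      · rw [if_neg hbq, add_zero]
    · rw [if_neg hap]
      by_cases hbq : q ≤ b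
      · rw [if_pos hbq, hv, if_pos (by omega), show b - q + q = b by omega, zero_add]
      · rw [if_neg hbq, add_zero, hc a b (by omega) (by omega)]
  · intro hmem
    obtain ⟨u, v, huv⟩ := Ideal.mem_span_pair.mp hmem
    funext ij
    show MvPowerSeries.coeff (E ij.1 ij.2) h = 0
    rw [← huv, map_add, mul_comm u, mul_comm v, coeff_Xpow_mul, coeff_Ypow_mul,
      if_neg (by omega), if_neg (by omega), add_zero]

set_option maxHeartbeats 1000000 in
lemma XY_pow_quotient (p q : ℕ) :
    Module.Finite ℂ (R2 ⧸ Ideal.span {(MvPowerSeries.X 0 : R2)^p, (MvPowerSeries.X 1 : R2)^q}) ∧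
    Module.finrank ℂ
      (R2 ⧸ Ideal.span {(MvPowerSeries.X 0 : R2)^p, (MvPowerSeries.X 1 : R2)^q}) = p * q := by
  set J := Ideal.span ({(MvPowerSeries.X 0 : R2)^p, (MvPowerSeries.X 1 : R2)^q} : Set R2)
  let e1 : (R2 ⧸ LinearMap.ker (kappa p q)) ≃ₗ[ℂ] (Fin p × Fin q → ℂ) :=
    LinearMap.quotKerEquivOfSurjective _ (kappa_surjective p q)
  let e2 : (R2 ⧸ Submodule.restrictScalars ℂ J) ≃ₗ[ℂ] (R2 ⧸ LinearMap.ker (kappa p q)) :=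
    Submodule.quotEquivOfEq _ _ (kappa_ker p q).symm
  let e3 : (R2 ⧸ J) ≃ₗ[ℂ] (R2 ⧸ Submodule.restrictScalars ℂ J) :=
    (Submodule.Quotient.restrictScalarsEquiv ℂ (J : Submodule R2 R2)).symm
  let e : (R2 ⧸ J) ≃ₗ[ℂ] (Fin p × Fin q → ℂ) := e3 ≪≫ₗ e2 ≪≫ₗ e1
  constructor
  · exact Module.Finite.equiv e.symm
  · rw [e.finrank_eq, Module.finrank_pi, Fintype.card_prod, Fintype.card_fin, Fintype.card_fin]

/-! ### splitting off a factor of a generator -/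

set_option maxHeartbeats 2000000 in
lemma span_split_finrank (A B C : R2)
    (hcolon : ∀ t : R2, t * A ∈ Ideal.span ({A * B, C} : Set R2) →
       t ∈ Ideal.span ({B, C} : Set R2))
    (h1 : Module.Finite ℂ (R2 ⧸ Ideal.span ({B, C} : Set R2)))
    (h2 : Module.Finite ℂ (R2 ⧸ Ideal.span ({A, C} : Set R2))) :
    Module.Finite ℂ (R2 ⧸ Ideal.span ({A * B, C} : Set R2)) ∧
    Module.finrank ℂ (R2 ⧸ Ideal.span ({A * B, C} : Set R2))
      = Module.finrank ℂ (R2 ⧸ Ideal.span ({B, C} : Set R2))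
        + Module.finrank ℂ (R2 ⧸ Ideal.span ({A, C} : Set R2)) := by
  set I1 := Ideal.span ({B, C} : Set R2) with hI1
  set I2 := Ideal.span ({A, C} : Set R2) with hI2
  set J := Ideal.span ({A * B, C} : Set R2) with hJdef
  set I1' := Submodule.restrictScalars ℂ (I1 : Submodule R2 R2) with hI1'
  set I2' := Submodule.restrictScalars ℂ (I2 : Submodule R2 R2) with hI2'
  set J' := Submodule.restrictScalars ℂ (J : Submodule R2 R2) with hJ'
  have hle1 : I1' ≤ J'.comap (LinearMap.mulLeft ℂ A) := by
    intro t ht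
    obtain ⟨u, v, huv⟩ := Ideal.mem_span_pair.mp ht
    simp only [Submodule.mem_comap, LinearMap.mulLeft_apply, hJ', Submodule.restrictScalars_mem]
    exact Ideal.mem_span_pair.mpr ⟨u, A * v, by rw [← huv]; ring⟩
  have hle2 : J' ≤ I2'.comap (LinearMap.id : R2 →ₗ[ℂ] R2) := by
    intro t ht
    simp only [Submodule.mem_comap, LinearMap.id_apply, hI2', Submodule.restrictScalars_mem]
    simp only [hJ', Submodule.restrictScalars_mem] at ht
    obtain ⟨u, v, huv⟩ := Ideal.mem_span_pair.mp ht
    exact Ideal.mem_span_pair.mpr ⟨u * B, v, by rw [← huv]; ring⟩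
  let mulA : (R2 ⧸ I1') →ₗ[ℂ] (R2 ⧸ J') :=
    Submodule.mapQ I1' J' (LinearMap.mulLeft ℂ A) hle1
  let pim : (R2 ⧸ J') →ₗ[ℂ] (R2 ⧸ I2') :=
    Submodule.mapQ J' I2' LinearMap.id hle2
  have hπsurj : Function.Surjective pim := by
    intro x
    obtain ⟨t, rfl⟩ := Submodule.Quotient.mk_surjective I2' x
    exact ⟨Submodule.Quotient.mk t, by rw [Submodule.mapQ_apply]; rfl⟩
  have hinj : Function.Injective mulA := by
    rw [← LinearMap.ker_eq_bot, eq_bot_iff]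
    intro x hx
    obtain ⟨t, rfl⟩ := Submodule.Quotient.mk_surjective I1' x
    rw [LinearMap.mem_ker, Submodule.mapQ_apply, Submodule.Quotient.mk_eq_zero] at hx
    rw [Submodule.mem_bot, Submodule.Quotient.mk_eq_zero]
    simp only [LinearMap.mulLeft_apply, hJ', Submodule.restrictScalars_mem] at hx
    simp only [hI1', Submodule.restrictScalars_mem]
    exact hcolon t (by rwa [mul_comm])
  have hexact : LinearMap.range mulA = LinearMap.ker pim := by
    ext x
    constructor
    · rintro ⟨y, rfl⟩
      obtain ⟨t, rfl⟩ := Submodule.Quotient.mk_surjective I1' y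
      rw [LinearMap.mem_ker]
      show pim (mulA (Submodule.Quotient.mk t)) = 0
      rw [Submodule.mapQ_apply, Submodule.mapQ_apply, Submodule.Quotient.mk_eq_zero]
      simp only [LinearMap.mulLeft_apply, LinearMap.id_apply, hI2',
        Submodule.restrictScalars_mem]
      exact Ideal.mul_mem_right t I2 (Ideal.subset_span (by simp))
    · intro hx
      obtain ⟨t, rfl⟩ := Submodule.Quotient.mk_surjective J' x
      rw [LinearMap.mem_ker, Submodule.mapQ_apply, Submodule.Quotient.mk_eq_zero] at hx
      simp only [LinearMap.id_apply, hI2', Submodule.restrictScalars_mem] at hx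
      obtain ⟨u, v, huv⟩ := Ideal.mem_span_pair.mp hx
      refine ⟨Submodule.Quotient.mk u, ?_⟩
      rw [Submodule.mapQ_apply]
      rw [Submodule.Quotient.eq]
      simp only [LinearMap.mulLeft_apply, hJ', Submodule.restrictScalars_mem]
      exact Ideal.mem_span_pair.mpr ⟨0, -v, by rw [← huv]; ring⟩
  haveI f1 : Module.Finite ℂ (R2 ⧸ I1') :=
    Module.Finite.equiv (Submodule.Quotient.restrictScalarsEquiv ℂ (I1 : Submodule R2 R2)).symm
  haveI f2 : Module.Finite ℂ (R2 ⧸ I2') :=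
    Module.Finite.equiv (Submodule.Quotient.restrictScalarsEquiv ℂ (I2 : Submodule R2 R2)).symm
  let eker : (R2 ⧸ I1') ≃ₗ[ℂ] (LinearMap.ker pim) :=
    (LinearEquiv.ofInjective mulA hinj) ≪≫ₗ (LinearEquiv.ofEq _ _ hexact)
  let equot : ((R2 ⧸ J') ⧸ (LinearMap.ker pim)) ≃ₗ[ℂ] (R2 ⧸ I2') :=
    LinearMap.quotKerEquivOfSurjective pim hπsurj
  haveI fker : Module.Finite ℂ (LinearMap.ker pim) := Module.Finite.equiv eker
  haveI fquot : Module.Finite ℂ ((R2 ⧸ J') ⧸ (LinearMap.ker pim)) :=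
    Module.Finite.equiv equot.symm
  haveI fJ' : Module.Finite ℂ (R2 ⧸ J') := by
    rw [← IsNoetherian.iff_fg] at fker fquot ⊢
    exact (isNoetherian_iff_submodule_quotient (LinearMap.ker pim)).mpr ⟨fker, fquot⟩
  haveI fJ : Module.Finite ℂ (R2 ⧸ J) :=
    Module.Finite.equiv (Submodule.Quotient.restrictScalarsEquiv ℂ (J : Submodule R2 R2))
  refine ⟨fJ, ?_⟩
  have hr1 : Module.finrank ℂ (R2 ⧸ J)
      = Module.finrank ℂ (R2 ⧸ J') :=
    (Submodule.Quotient.restrictScalarsEquiv ℂ (J : Submodule R2 R2)).finrank_eq.symm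
  have hr2 := Submodule.finrank_quotient_add_finrank (LinearMap.ker pim)
  have hr3 : Module.finrank ℂ (LinearMap.ker pim) = Module.finrank ℂ (R2 ⧸ I1) :=
    (eker.symm ≪≫ₗ (Submodule.Quotient.restrictScalarsEquiv ℂ (I1 : Submodule R2 R2))).finrank_eq
  have hr4 : Module.finrank ℂ ((R2 ⧸ J') ⧸ (LinearMap.ker pim))
      = Module.finrank ℂ (R2 ⧸ I2) :=
    (equot ≪≫ₗ (Submodule.Quotient.restrictScalarsEquiv ℂ (I2 : Submodule R2 R2))).finrank_eq
  omega

/-! ### derivatives, restY, and span manipulations -/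

lemma E_add_single0 (a b : ℕ) : E a b + Finsupp.single 0 1 = E (a+1) b := by
  simp only [E, Finsupp.single_add]
  abel

lemma E_add_single1 (a b : ℕ) : E a b + Finsupp.single 1 1 = E a (b+1) := by
  simp only [E, Finsupp.single_add]
  abel

lemma coeff_pderiv0 (h : R2) (a b : ℕ) :
    MvPowerSeries.coeff (E a b) (pderiv2 0 h)
      = ((a : ℂ) + 1) * MvPowerSeries.coeff (E (a+1) b) h := by
  show ((E a b 0 : ℂ) + 1) * MvPowerSeries.coeff (E a b + Finsupp.single 0 1) h = _
  rw [E_apply0, E_add_single0]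

lemma coeff_pderiv1 (h : R2) (a b : ℕ) :
    MvPowerSeries.coeff (E a b) (pderiv2 1 h)
      = ((b : ℂ) + 1) * MvPowerSeries.coeff (E a (b+1)) h := by
  show ((E a b 1 : ℂ) + 1) * MvPowerSeries.coeff (E a b + Finsupp.single 1 1) h = _
  rw [E_apply1, E_add_single1]

lemma pderiv1_substX (n : ℕ) (f : R2) :
    pderiv2 1 (substX n f) = substX n (pderiv2 1 f) := by
  apply MvPowerSeries.ext; intro e
  obtain ⟨a, b, rfl⟩ : ∃ a b, e = E a b := ⟨e 0, e 1, (E_eta e).symm⟩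
  rw [coeff_pderiv1, coeff_substX, coeff_substX]
  split_ifs with h
  · rw [coeff_pderiv1]
  · rw [mul_zero]

lemma pderiv0_substX (n : ℕ) (hn : 1 ≤ n) (f : R2) :
    pderiv2 0 (substX n f)
      = (n : ℂ) • ((MvPowerSeries.X 0 : R2)^(n-1) * substX n (pderiv2 0 f)) := by
  apply MvPowerSeries.ext; intro e
  obtain ⟨a, b, rfl⟩ : ∃ a b, e = E a b := ⟨e 0, e 1, (E_eta e).symm⟩
  rw [coeff_pderiv0, map_smul, coeff_Xpow_mul, smul_eq_mul]
  by_cases hdvd : n ∣ a + 1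
  · obtain ⟨k, hk⟩ := hdvd
    have hk1 : 1 ≤ k := by
      rcases Nat.eq_zero_or_pos k with rfl | h
      · rw [mul_zero] at hk; omega
      · exact h
    have h1 : n - 1 ≤ a := by
      have h' : n * 1 ≤ n * k := Nat.mul_le_mul_left n hk1
      rw [mul_one] at h'
      omega
    have h2 : a - (n - 1) = n * (k - 1) := by
      have h' : n * (k-1) + n * 1 = n * k := by rw [← Nat.mul_add]; congr 1; omega
      rw [mul_one] at h'
      omega
    rw [coeff_substX, if_pos ⟨k, hk⟩, if_pos h1, coeff_substX, h2,
      if_pos (Dvd.intro _ rfl), Nat.mul_div_cancel_left _ hn, coeff_pderiv0,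
      show (a+1)/n = k from by rw [hk, Nat.mul_div_cancel_left _ hn],
      show k - 1 + 1 = k from by omega]
    have hc1 : ((a:ℂ)+1) = (n : ℂ) * (k : ℂ) := by
      have h' : ((a+1 : ℕ) : ℂ) = ((n*k : ℕ) : ℂ) := by rw [hk]
      push_cast at h'
      exact h' 
    have hc2 : ((k-1 : ℕ) : ℂ) + 1 = (k:ℂ) := by
      rw [Nat.cast_sub hk1]
      push_cast
      ring
    rw [hc1, hc2]
    ring
  · rw [coeff_substX, if_neg hdvd, mul_zero]
    split_ifs with h1
    · rw [coeff_substX, if_neg, mul_zero]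
      rintro ⟨d, hd⟩
      refine hdvd ⟨d + 1, ?_⟩
      have h3 : n * (d+1) = n * d + n := by ring
      omega
    · rw [mul_zero]

/-! ### restY facts -/

lemma coeff_restY (w : R2) (b : ℕ) :
    PowerSeries.coeff b (restY w) = MvPowerSeries.coeff (E 0 b) w := by
  rw [restY, PowerSeries.coeff_mk]
  congr 1
  simp [E]

lemma restY_mul (u v : R2) : restY (u * v) = restY u * restY v := by
  apply PowerSeries.ext; intro b
  rw [PowerSeries.coeff_mul, coeff_restY, coeff_mul2, Finset.Nat.sum_antidiagonal_eq_sum_range_succ_mk]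
  rw [Finset.sum_range_one]
  simp [coeff_restY]

lemma restY_substX (n : ℕ) (w : R2) : restY (substX n w) = restY w := by
  apply PowerSeries.ext; intro b
  rw [coeff_restY, coeff_restY, coeff_substX, if_pos (dvd_zero n), Nat.zero_div]

lemma restY_X0 : restY (MvPowerSeries.X 0 : R2) = 0 := by
  apply PowerSeries.ext; intro b
  rw [coeff_restY, MvPowerSeries.X, MvPowerSeries.coeff_monomial, if_neg, map_zero]
  intro hEq
  have := DFunLike.congr_fun hEq 0
  rw [E_apply0] at this
  simp [Finsupp.single_apply] at this

lemma restY_pderiv1 (f : R2) (b : ℕ) :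
    PowerSeries.coeff b (restY (pderiv2 1 f))
      = ((b:ℂ)+1) * PowerSeries.coeff (b+1) (restY f) := by
  rw [coeff_restY, coeff_pderiv1, coeff_restY]

lemma X0_ne_zero : (MvPowerSeries.X 0 : R2) ≠ 0 := by
  intro h0
  have := congrArg (MvPowerSeries.coeff (Finsupp.single 0 1)) h0
  rw [MvPowerSeries.coeff_X, if_pos rfl, map_zero] at this
  exact one_ne_zero this

/-! ### colon lemma -/

lemma colon_lemma (Cc : R2) (hC : restY Cc ≠ 0) (k : ℕ) :
    ∀ s v : R2, s * (MvPowerSeries.X 0 : R2)^k = v * Cc →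
      s ∈ Ideal.span ({Cc} : Set R2) := by
  induction k with
  | zero =>
    intro s v h
    rw [pow_zero, mul_one] at h
    exact Ideal.mem_span_singleton.mpr ⟨v, by rw [h]; ring⟩
  | succ k ih =>
    intro s v h
    have hrv : restY v = 0 := by
      have h' := congrArg restY h
      rw [restY_mul, restY_mul, show ((MvPowerSeries.X 0 : R2))^(k+1)
          = (MvPowerSeries.X 0 : R2) * (MvPowerSeries.X 0 : R2)^k from by ring,
        restY_mul, restY_X0, zero_mul, mul_zero] at h'
      rcases mul_eq_zero.mp h'.symm with h'' | h''
      · exact h''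
      · exact absurd h'' hC
    -- X0 divides v
    have hdvd : (MvPowerSeries.X 0 : R2) ∣ v := by
      rw [MvPowerSeries.X_dvd_iff]
      intro mm hmm
      have h2 : E 0 (mm 1) = mm := by
        conv_rhs => rw [← E_eta mm]
        rw [hmm]
      rw [← h2, ← coeff_restY, hrv, map_zero]
    obtain ⟨v', rfl⟩ := hdvd
    apply ih s v'
    have hX : (MvPowerSeries.X 0 : R2) * (s * (MvPowerSeries.X 0 : R2)^k)
        = (MvPowerSeries.X 0 : R2) * (v' * Cc) := by
      linear_combination h
    exact mul_left_cancel₀ X0_ne_zero hX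

/-! ### span manipulations and Pembed -/

lemma span_pair_smul_left (c : ℂ) (hc : c ≠ 0) (w v : R2) :
    Ideal.span ({c • w, v} : Set R2) = Ideal.span ({w, v} : Set R2) := by
  have h1 : c • w ∈ Ideal.span ({w, v} : Set R2) := by
    rw [Algebra.smul_def]
    exact Ideal.mul_mem_left _ _ (Ideal.subset_span (by simp))
  have h2 : w ∈ Ideal.span ({c • w, v} : Set R2) := by
    have heq : w = (algebraMap ℂ R2 c⁻¹) * (c • w) := by
      rw [Algebra.smul_def, ← mul_assoc, ← map_mul, inv_mul_cancel₀ hc, map_one, one_mul]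
    have h2' : (algebraMap ℂ R2 c⁻¹) * (c • w) ∈ Ideal.span ({c • w, v} : Set R2) :=
      Ideal.mul_mem_left _ _ (Ideal.subset_span (by simp))
    rwa [← heq] at h2' 
  apply le_antisymm <;> rw [Ideal.span_le, Set.insert_subset_iff, Set.singleton_subset_iff]
  · exact ⟨h1, Ideal.subset_span (by simp)⟩
  · exact ⟨h2, Ideal.subset_span (by simp)⟩

lemma span_pair_unit_right (AA w u : R2) (hu : IsUnit u) :
    Ideal.span ({AA, u * w} : Set R2) = Ideal.span ({AA, w} : Set R2) := by
  have h1 : u * w ∈ Ideal.span ({AA, w} : Set R2) :=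
    Ideal.mul_mem_left _ _ (Ideal.subset_span (by simp))
  have h2 : w ∈ Ideal.span ({AA, u * w} : Set R2) := by
    obtain ⟨U, rfl⟩ := hu
    have heq : w = (↑U⁻¹ : R2) * ((U : R2) * w) := by
      rw [← mul_assoc, Units.inv_mul, one_mul]
    rw [heq]
    exact Ideal.mul_mem_left _ _ (Ideal.subset_span (by simp))
  apply le_antisymm <;> rw [Ideal.span_le, Set.insert_subset_iff, Set.singleton_subset_iff]
  · exact ⟨Ideal.subset_span (by simp), h1⟩
  · exact ⟨Ideal.subset_span (by simp), h2⟩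

lemma span_pair_sub_dvd (AA C C' : R2) (h : AA ∣ (C - C')) :
    Ideal.span ({AA, C} : Set R2) = Ideal.span ({AA, C'} : Set R2) := by
  obtain ⟨t, ht⟩ := h
  have h1 : C ∈ Ideal.span ({AA, C'} : Set R2) :=
    Ideal.mem_span_pair.mpr ⟨t, 1, by linear_combination -ht⟩
  have h2 : C' ∈ Ideal.span ({AA, C} : Set R2) :=
    Ideal.mem_span_pair.mpr ⟨-t, 1, by linear_combination ht⟩
  apply le_antisymm <;> rw [Ideal.span_le, Set.insert_subset_iff, Set.singleton_subset_iff]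
  · exact ⟨Ideal.subset_span (by simp), h1⟩
  · exact ⟨Ideal.subset_span (by simp), h2⟩

def Pembed (P : PowerSeries ℂ) : R2 :=
  fun e => if e 0 = 0 then PowerSeries.coeff (e 1) P else 0

lemma coeff_Pembed (P : PowerSeries ℂ) (a b : ℕ) :
    MvPowerSeries.coeff (E a b) (Pembed P)
      = if a = 0 then PowerSeries.coeff b P else 0 := by
  show (if E a b 0 = 0 then PowerSeries.coeff (E a b 1) P else 0) = _
  rw [E_apply0, E_apply1]

lemma substX_sub_Pembed (n : ℕ) (hn : 1 ≤ n) (w : R2) :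
    (MvPowerSeries.X 0 : R2)^(n-1) ∣ (substX n w - Pembed (restY w)) := by
  rw [MvPowerSeries.X_pow_dvd_iff]
  intro mm hmm
  obtain ⟨a, b, rfl⟩ : ∃ a b, mm = E a b := ⟨mm 0, mm 1, (E_eta mm).symm⟩
  rw [E_apply0] at hmm
  rw [map_sub, coeff_substX, coeff_Pembed]
  rcases Nat.eq_zero_or_pos a with rfl | ha
  · rw [if_pos (dvd_zero n), if_pos rfl, Nat.zero_div, coeff_restY, sub_self]
  · rw [if_neg, if_neg (by omega), sub_zero]
    exact fun hdd => absurd (Nat.le_of_dvd ha hdd) (by omega)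

lemma Pembed_factor (m1 : ℕ) (P : PowerSeries ℂ)
    (hlow : ∀ j, j < m1 → PowerSeries.coeff j P = 0) :
    Pembed P
      = Pembed (PowerSeries.mk fun j => PowerSeries.coeff (j + m1) P)
          * (MvPowerSeries.X 1 : R2)^m1 := by
  apply MvPowerSeries.ext; intro e
  obtain ⟨a, b, rfl⟩ : ∃ a b, e = E a b := ⟨e 0, e 1, (E_eta e).symm⟩
  rw [mul_comm, coeff_Ypow_mul, coeff_Pembed]
  by_cases hb : m1 ≤ b
  · rw [if_pos hb, coeff_Pembed]
    split_ifs with ha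
    · rw [PowerSeries.coeff_mk, show b - m1 + m1 = b from by omega]
    · rfl
  · rw [if_neg hb]
    split_ifs with ha
    · exact hlow b (by omega)
    · rfl

lemma Pembed_isUnit (Q : PowerSeries ℂ) (h : PowerSeries.coeff 0 Q ≠ 0) :
    IsUnit (Pembed Q) := by
  rw [MvPowerSeries.isUnit_iff_constantCoeff]
  have h0 : (0 : Fin 2 →₀ ℕ) = E 0 0 := by simp [E]
  have : MvPowerSeries.constantCoeff (Pembed Q) = PowerSeries.coeff 0 Q := by
    rw [← MvPowerSeries.coeff_zero_eq_constantCoeff, h0, coeff_Pembed, if_pos rfl]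
  rw [this]
  exact isUnit_iff_ne_zero.mpr h

/-- Milnor number of the Kummer transform at a preimage of a point of type 1.
Let `f ∈ ℂ⟦x,y⟧` with `f(0,0) = 0`, `f(0,y) ≠ 0` of order `m ≥ 1`, and finite Milnor
number `μ = dim_ℂ ℂ⟦x,y⟧/(f_x, f_y)`.  Then for every `n ≥ 1`, `g(x,y) := f(xⁿ, y)`
satisfies `dim_ℂ ℂ⟦x,y⟧/(g_x, g_y) = n·μ + (m − 1)(n − 1)`. -/
theorem kummer_type1_milnor (f : MvPowerSeries (Fin 2) ℂ)
    (hf0 : MvPowerSeries.coeff 0 f = 0)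
    (m : ℕ) (hm1 : 1 ≤ m) (hm : (restY f).order = m)
    (hfin : Module.Finite ℂ
      (MvPowerSeries (Fin 2) ℂ ⧸ Ideal.span {pderiv2 0 f, pderiv2 1 f}))
    (μ : ℕ)
    (hμ : Module.finrank ℂ
      (MvPowerSeries (Fin 2) ℂ ⧸ Ideal.span {pderiv2 0 f, pderiv2 1 f}) = μ)
    (n : ℕ) (hn : 1 ≤ n) (g : MvPowerSeries (Fin 2) ℂ) (hg : g = substX n f) :
    Module.Finite ℂ
      (MvPowerSeries (Fin 2) ℂ ⧸ Ideal.span {pderiv2 0 g, pderiv2 1 g}) ∧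
    Module.finrank ℂ
      (MvPowerSeries (Fin 2) ℂ ⧸ Ideal.span {pderiv2 0 g, pderiv2 1 g}) =
        n * μ + (m - 1) * (n - 1) := by
  subst hg
  obtain ⟨htopc, hlowc⟩ := PowerSeries.order_eq_nat.mp hm
  have hP'coeff : ∀ b : ℕ, PowerSeries.coeff b (restY (pderiv2 1 f))
      = ((b:ℂ)+1) * PowerSeries.coeff (b+1) (restY f) := restY_pderiv1 f
  have hP'top : PowerSeries.coeff (m-1) (restY (pderiv2 1 f)) ≠ 0 := by
    rw [hP'coeff, show m-1+1 = m from by omega]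
    apply mul_ne_zero _ htopc
    have hc : ((m-1:ℕ):ℂ) + 1 = (m:ℂ) := by
      rw [Nat.cast_sub hm1]; push_cast; ring
    rw [hc]
    exact Nat.cast_ne_zero.mpr (by omega)
  have hP'low : ∀ j, j < m - 1 → PowerSeries.coeff j (restY (pderiv2 1 f)) = 0 := by
    intro j hj
    rw [hP'coeff, hlowc (j+1) (by exact_mod_cast by omega), mul_zero]
  have hP'ne : restY (pderiv2 1 f) ≠ 0 := fun h => hP'top (by rw [h, map_zero])
  have hspan : Ideal.span {pderiv2 0 (substX n f), pderiv2 1 (substX n f)}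
      = Ideal.span ({(MvPowerSeries.X 0 : R2)^(n-1) * substX n (pderiv2 0 f),
          substX n (pderiv2 1 f)} : Set R2) := by
    rw [pderiv0_substX n hn f, pderiv1_substX n f,
      span_pair_smul_left _ (Nat.cast_ne_zero.mpr (by omega))]
  have hCne : restY (substX n (pderiv2 1 f)) ≠ 0 := by
    rw [restY_substX]; exact hP'ne
  have hcolon : ∀ t : R2,
      t * ((MvPowerSeries.X 0 : R2)^(n-1))
        ∈ Ideal.span ({(MvPowerSeries.X 0 : R2)^(n-1) * substX n (pderiv2 0 f),
            substX n (pderiv2 1 f)} : Set R2) →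
      t ∈ Ideal.span ({substX n (pderiv2 0 f), substX n (pderiv2 1 f)} : Set R2) := by
    intro t ht
    obtain ⟨u, v, huv⟩ := Ideal.mem_span_pair.mp ht
    have heq : (t - u * substX n (pderiv2 0 f)) * (MvPowerSeries.X 0 : R2)^(n-1)
        = v * substX n (pderiv2 1 f) := by
      linear_combination -huv
    have hmem := colon_lemma (substX n (pderiv2 1 f)) hCne (n-1) _ v heq
    obtain ⟨w, hw⟩ := Ideal.mem_span_singleton.mp hmem
    exact Ideal.mem_span_pair.mpr ⟨u, w, by linear_combination -hw⟩
  have hq1 := substX_pair_quotient n hn (pderiv2 0 f) (pderiv2 1 f) hfin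
  have hspan2 : Ideal.span ({(MvPowerSeries.X 0 : R2)^(n-1),
        substX n (pderiv2 1 f)} : Set R2)
      = Ideal.span ({(MvPowerSeries.X 0 : R2)^(n-1),
          (MvPowerSeries.X 1 : R2)^(m-1)} : Set R2) := by
    rw [span_pair_sub_dvd _ _ _ (substX_sub_Pembed n hn (pderiv2 1 f)),
      Pembed_factor (m-1) _ hP'low]
    exact span_pair_unit_right _ _ _ (Pembed_isUnit _ (by
      rw [PowerSeries.coeff_mk, zero_add]; exact hP'top))
  have hq2 := XY_pow_quotient (n-1) (m-1)
  rw [← hspan2] at hq2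
  have hsplit := span_split_finrank ((MvPowerSeries.X 0 : R2)^(n-1))
    (substX n (pderiv2 0 f)) (substX n (pderiv2 1 f)) hcolon hq1.1 hq2.1
  rw [hspan]
  refine ⟨hsplit.1, ?_⟩
  rw [hsplit.2, hq1.2, hq2.2, hμ, Nat.mul_comm (n-1) (m-1)]
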